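/- Let d ∈ ℕ and 0 < α < 1/(d+1). Suppose r : X → ℝ^d is a map such that for every distribution D on X × {−1,+1} realizable by a concept class C, there exists w ∈ ℝ^d with Pr_{(x,y)∼D}[sign(⟨w, r(x)⟩) ≠ y] ≤ α. Then for every finite sample S ⊆ X × {−1,+1} realizable by C, there exists w_S ∈ ℝ^d with sign(⟨w_S, r(x)⟩) = y for all (x,y) ∈ S. -/

import Mathlib

open MeasureTheory
open scoped ENNReal

/-- `sgn t = +1` if `t ≥ 0` and `-1` otherwise. -/
noncomputable def sgn (t : ℝ) : ℝ := if 0 ≤ t then 1 else -1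

theorem sgn_set_convex (d : ℕ) (v : EuclideanSpace ℝ (Fin d)) (y : ℝ) :
    Convex ℝ {w : EuclideanSpace ℝ (Fin d) | sgn (inner ℝ w v : ℝ) = y} := by
  have hlin : IsLinearMap ℝ (fun w : EuclideanSpace ℝ (Fin d) => (inner ℝ w v : ℝ)) :=
    ⟨fun a b => inner_add_left _ _ _, fun c a => real_inner_smul_left _ _ _⟩
  by_cases hy : y = 1
  · have : {w : EuclideanSpace ℝ (Fin d) | sgn (inner ℝ w v : ℝ) = y}
        = {w | 0 ≤ (inner ℝ w v : ℝ)} := by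
      ext w; simp only [Set.mem_setOf_eq, sgn, hy]
      constructor
      · intro h; by_contra hn; rw [if_neg hn] at h; norm_num at h
      · intro h; rw [if_pos h]
    rw [this]; exact convex_halfSpace_ge hlin 0
  by_cases hy' : y = -1
  · have : {w : EuclideanSpace ℝ (Fin d) | sgn (inner ℝ w v : ℝ) = y}
        = {w | (inner ℝ w v : ℝ) < 0} := by
      ext w; simp only [Set.mem_setOf_eq, sgn, hy']
      constructor
      · intro h; by_contra hn; push_neg at hn; rw [if_pos hn] at h; norm_num at h
      · intro h; rw [if_neg (not_le.mpr h)]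
    rw [this]; exact convex_halfSpace_lt hlin 0
  · have : {w : EuclideanSpace ℝ (Fin d) | sgn (inner ℝ w v : ℝ) = y} = ∅ := by
      ext w; simp only [Set.mem_setOf_eq, Set.mem_empty_iff_false, iff_false, sgn]
      split
      · intro h; exact hy h.symm
      · intro h; exact hy' h.symm
    rw [this]; exact convex_empty

/-- Core step: from the α-representation hypothesis, any nonempty realizable sample `T`
with `1 / T.card > α` is classified perfectly by some `w`. -/
theorem perfect_on_small {X : Type*} [MeasurableSpace X] [MeasurableSingletonClass X]
    (d : ℕ) (α : ℝ)
    (C : Set (X → ℝ)) (r : X → EuclideanSpace ℝ (Fin d))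
    (hrep : ∀ D : Measure (X × ℝ), IsProbabilityMeasure D →
      (∃ c ∈ C, ∀ᵐ p ∂D, c p.1 = p.2) →
      ∃ w : EuclideanSpace ℝ (Fin d),
        (D {p | sgn (inner ℝ w (r p.1) : ℝ) ≠ p.2}).toReal ≤ α)
    (T : Finset (X × ℝ)) (hT : T.Nonempty) (hcard : α < ((T.card : ℝ))⁻¹)
    (c : X → ℝ) (hc : c ∈ C) (hcT : ∀ p ∈ T, c p.1 = p.2) :
    ∃ w : EuclideanSpace ℝ (Fin d), ∀ p ∈ T, sgn (inner ℝ w (r p.1) : ℝ) = p.2 := by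
  classical
  have hcard0 : 0 < T.card := Finset.card_pos.mpr hT
  have hcardR : (0:ℝ) < T.card := by exact_mod_cast hcard0
  set D : Measure (X × ℝ) := ((T.card : ℝ≥0∞))⁻¹ • (∑ p ∈ T, Measure.dirac p) with hD
  have hne : (T.card : ℝ≥0∞) ≠ 0 := by exact_mod_cast hcard0.ne'
  have hnetop : (T.card : ℝ≥0∞) ≠ ⊤ := ENNReal.natCast_ne_top _
  have hDapp : ∀ A : Set (X × ℝ), MeasurableSet A →
      D A = ((T.card : ℝ≥0∞))⁻¹ * ∑ p ∈ T, A.indicator 1 p := by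
    intro A hA
    rw [hD, Measure.smul_apply, Measure.finset_sum_apply]
    simp only [smul_eq_mul]
    congr 1
    exact Finset.sum_congr rfl fun p _ => Measure.dirac_apply' p hA
  have hprob : IsProbabilityMeasure D := by
    constructor
    rw [hDapp Set.univ MeasurableSet.univ]
    simp only [Set.indicator_univ, Pi.one_apply, Finset.sum_const, nsmul_eq_mul, mul_one]
    exact ENNReal.inv_mul_cancel hne hnetop
  have hreal : ∃ c' ∈ C, ∀ᵐ p ∂D, c' p.1 = p.2 := by
    refine ⟨c, hc, ?_⟩
    rw [ae_iff]
    have hsub : {p : X × ℝ | ¬ c p.1 = p.2} ⊆ (↑T : Set (X × ℝ))ᶜ := by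
      intro p hp hpT
      exact hp (hcT p hpT)
    refine measure_mono_null hsub ?_
    have hTm : MeasurableSet (↑T : Set (X × ℝ)) := T.finite_toSet.measurableSet
    rw [hDapp _ hTm.compl]
    have : ∀ p ∈ T, ((↑T : Set (X × ℝ))ᶜ).indicator (1 : X × ℝ → ℝ≥0∞) p = 0 := by
      intro p hp
      simp [Set.indicator_of_notMem, hp]
    rw [Finset.sum_congr rfl this]
    simp
  obtain ⟨w, hw⟩ := hrep D hprob hreal
  refine ⟨w, ?_⟩
  by_contra hbad
  push_neg at hbad
  obtain ⟨p0, hp0T, hp0⟩ := hbad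
  -- D of bad set is at least 1/T.card
  set B := {p : X × ℝ | sgn (inner ℝ w (r p.1) : ℝ) ≠ p.2}
  have hsingle : D {p0} ≤ D B := by
    apply measure_mono
    intro q hq
    rw [Set.mem_singleton_iff] at hq
    subst hq
    exact hp0
  have hDp0 : ((T.card : ℝ≥0∞))⁻¹ ≤ D {p0} := by
    rw [hDapp {p0} (measurableSet_singleton p0)]
    have h1 : (1 : ℝ≥0∞) ≤ ∑ p ∈ T, Set.indicator {p0} 1 p := by
      calc (1:ℝ≥0∞) = Set.indicator {p0} 1 p0 := by simp
      _ ≤ _ := Finset.single_le_sum (fun p _ => zero_le) hp0T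
    calc ((T.card : ℝ≥0∞))⁻¹ = ((T.card : ℝ≥0∞))⁻¹ * 1 := by rw [mul_one]
      _ ≤ _ := by exact mul_le_mul_right h1 _
  have hDB : ((T.card : ℝ≥0∞))⁻¹ ≤ D B := le_trans hDp0 hsingle
  have hBfin : D B ≠ ⊤ := (measure_lt_top D B).ne
  have : ((T.card : ℝ))⁻¹ ≤ (D B).toReal := by
    have := ENNReal.toReal_mono hBfin hDB
    rwa [ENNReal.toReal_inv, ENNReal.toReal_natCast] at this
  linarith [hw]

/-- An `α`-representation by halfspaces in `ℝ^d` with `α < 1/(d+1)` classifies every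
`C`-realizable finite sample perfectly. -/
theorem alpha_representation_is_exact_on_samples {X : Type*} [MeasurableSpace X]
    [MeasurableSingletonClass X]
    (d : ℕ) (α : ℝ) (hα : 0 < α) (hαd : α < 1 / (d + 1))
    (C : Set (X → ℝ)) (r : X → EuclideanSpace ℝ (Fin d))
    (hrep : ∀ D : Measure (X × ℝ), IsProbabilityMeasure D →
      (∃ c ∈ C, ∀ᵐ p ∂D, c p.1 = p.2) →
      ∃ w : EuclideanSpace ℝ (Fin d),
        (D {p | sgn (inner ℝ w (r p.1) : ℝ) ≠ p.2}).toReal ≤ α) :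
    ∀ S : Finset (X × ℝ), (∃ c ∈ C, ∀ p ∈ S, c p.1 = p.2) →
      ∃ wS : EuclideanSpace ℝ (Fin d), ∀ p ∈ S, sgn (inner ℝ wS (r p.1) : ℝ) = p.2 := by
  classical
  intro S hS
  obtain ⟨c, hc, hcS⟩ := hS
  have hfr : Module.finrank ℝ (EuclideanSpace ℝ (Fin d)) = d := by simp
  have hinter : (⋂ p ∈ S, {w : EuclideanSpace ℝ (Fin d) | sgn (inner ℝ w (r p.1) : ℝ) = p.2}).Nonempty := by
    apply Convex.helly_theorem' (𝕜 := ℝ)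
    · intro p _; exact sgn_set_convex d (r p.1) p.2
    · intro I hIS hIcard
      rw [hfr] at hIcard
      rcases I.eq_empty_or_nonempty with hI | hI
      · subst hI; simp
      · have hcardR : (0:ℝ) < I.card := by exact_mod_cast Finset.card_pos.mpr hI
        have hαI : α < ((I.card : ℝ))⁻¹ := by
          apply lt_of_lt_of_le hαd
          rw [one_div]
          apply inv_anti₀ hcardR
          exact_mod_cast hIcard
        obtain ⟨w, hw⟩ := perfect_on_small d α C r hrep I hI hαI c hc
          (fun p hp => hcS p (hIS hp))
        exact ⟨w, by simp only [Set.mem_iInter]; intro p hp; exact hw p hp⟩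
  obtain ⟨w, hw⟩ := hinter
  simp only [Set.mem_iInter, Set.mem_setOf_eq] at hw
  exact ⟨w, hw⟩
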